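/- If (x₁ + y₁)(t) = √2 sin(z₀ + π/4) cosh(t) gd(t) and (x₁ − y₁)(t) = √2 sin(z₀ − π/4) tanh(t), then these solve the first-order variational equations along the heteroclinic orbit with cos x₀(t) = tanh t: (x₁ + y₁)' = tanh(t)(x₁ + y₁) + (sin z₀ + cos z₀) and (x₁ − y₁)' = −tanh(t)(x₁ − y₁) + (sin z₀ − cos z₀), with (x₁ ± y₁)(0) = 0. -/

import Mathlib

open Real

lemma my_hasDerivAt_tanh (x : ℝ) :
    HasDerivAt Real.tanh (1 - Real.tanh x ^ 2) x := by
  have hc : Real.cosh x ≠ 0 := (Real.cosh_pos x).ne'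
  have h := (Real.hasDerivAt_sinh x).div (Real.hasDerivAt_cosh x) hc
  have heq : (Real.sinh / Real.cosh) = Real.tanh := by
    funext y; rw [Pi.div_apply, Real.tanh_eq_sinh_div_cosh]
  rw [heq] at h
  refine h.congr_deriv ?_
  symm
  rw [Real.tanh_eq_sinh_div_cosh]
  have := Real.cosh_sq_sub_sinh_sq x
  field_simp

lemma gd_hasDerivAt (t : ℝ) :
    HasDerivAt (fun s : ℝ => 2 * Real.arctan (Real.tanh (s / 2))) (1 / Real.cosh t) t := by
  have h1 : HasDerivAt (fun s : ℝ => s / 2) (1 / 2) t := by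
    simpa using (hasDerivAt_id t).div_const 2
  have h2 := (my_hasDerivAt_tanh (t / 2)).comp t h1
  have h3 := (Real.hasDerivAt_arctan (Real.tanh (t / 2))).comp t h2
  have h4 := h3.const_mul 2
  refine h4.congr_deriv ?_
  symm
  have hc2 : Real.cosh (t / 2) ≠ 0 := (Real.cosh_pos (t / 2)).ne'
  have hct : Real.cosh t ≠ 0 := (Real.cosh_pos t).ne'
  have hdenom : 1 + Real.tanh (t / 2) ^ 2 ≠ 0 := by positivity
  rw [Real.tanh_eq_sinh_div_cosh]
  have hdouble : Real.cosh t = Real.cosh (t / 2) ^ 2 + Real.sinh (t / 2) ^ 2 := by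
    have : t = t / 2 + t / 2 := by ring
    rw [this, Real.cosh_add]; ring
  field_simp
  nlinarith [Real.cosh_sq_sub_sinh_sq (t / 2), Real.cosh_pos (t / 2), Real.cosh_pos t]

/-- The functions u(t) = √2 sin(z₀+π/4) cosh(t) gd(t) and v(t) = √2 sin(z₀−π/4) tanh(t)
(with gd the Gudermannian function) solve the first-order variational equations along the
heteroclinic orbit: u' = tanh(t)·u + (sin z₀ + cos z₀), v' = −tanh(t)·v + (sin z₀ − cos z₀),
with u(0) = v(0) = 0. -/
theorem variational_equations_solution (z₀ : ℝ) :
    (∀ t : ℝ, HasDerivAt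
        (fun s : ℝ => Real.sqrt 2 * Real.sin (z₀ + Real.pi / 4) * Real.cosh s *
          (2 * Real.arctan (Real.tanh (s / 2))))
        (Real.tanh t * (Real.sqrt 2 * Real.sin (z₀ + Real.pi / 4) * Real.cosh t *
            (2 * Real.arctan (Real.tanh (t / 2))))
          + (Real.sin z₀ + Real.cos z₀)) t) ∧
    (∀ t : ℝ, HasDerivAt
        (fun s : ℝ => Real.sqrt 2 * Real.sin (z₀ - Real.pi / 4) * Real.tanh s)
        (-Real.tanh t * (Real.sqrt 2 * Real.sin (z₀ - Real.pi / 4) * Real.tanh t)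
          + (Real.sin z₀ - Real.cos z₀)) t) ∧
    Real.sqrt 2 * Real.sin (z₀ + Real.pi / 4) * Real.cosh 0 *
        (2 * Real.arctan (Real.tanh (0 / 2))) = 0 ∧
    Real.sqrt 2 * Real.sin (z₀ - Real.pi / 4) * Real.tanh 0 = 0 := by
  have hsq : Real.sqrt 2 * Real.sqrt 2 = 2 := Real.mul_self_sqrt (by norm_num)
  have hA : Real.sqrt 2 * Real.sin (z₀ + Real.pi / 4) = Real.sin z₀ + Real.cos z₀ := by
    rw [Real.sin_add, Real.sin_pi_div_four, Real.cos_pi_div_four]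
    linear_combination (Real.sin z₀ / 2 + Real.cos z₀ / 2) * hsq
  have hB : Real.sqrt 2 * Real.sin (z₀ - Real.pi / 4) = Real.sin z₀ - Real.cos z₀ := by
    rw [Real.sin_sub, Real.sin_pi_div_four, Real.cos_pi_div_four]
    linear_combination (Real.sin z₀ / 2 - Real.cos z₀ / 2) * hsq
  refine ⟨?_, ?_, ?_, ?_⟩
  · intro t
    set A := Real.sqrt 2 * Real.sin (z₀ + Real.pi / 4) with hAdef
    have h1 : HasDerivAt (fun s : ℝ => A * Real.cosh s * (2 * Real.arctan (Real.tanh (s / 2))))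
        (A * Real.sinh t * (2 * Real.arctan (Real.tanh (t / 2)))
          + A * Real.cosh t * (1 / Real.cosh t)) t := by
      have := (((Real.hasDerivAt_cosh t).const_mul A).mul (gd_hasDerivAt t))
      exact this
    convert h1 using 1
    have hct : Real.cosh t ≠ 0 := (Real.cosh_pos t).ne'
    rw [Real.tanh_eq_sinh_div_cosh, hA.symm]
    field_simp
  · intro t
    have h1 := (my_hasDerivAt_tanh t).const_mul (Real.sqrt 2 * Real.sin (z₀ - Real.pi / 4))
    refine h1.congr_deriv ?_
    symm
    rw [← hB]
    ring
  · simp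
  · simp
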